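/- Consider the index-2 Stokes-type DAE with E₁₁ ∈ ℂ^{n₁×n₁} invertible, A₁₁ ∈ ℂ^{n₁×n₁}, A₂₁ ∈ ℂ^{n₂×n₁} such that A₂₁ E₁₁^{-1} A₂₁ᵀ is invertible, B₁ ∈ ℂ^{n₁×m}, C₁ ∈ ℂ^{p×n₁}, D ∈ ℂ^{p×m}, transfer function G(s) = ℭ(s𝔼 − 𝔸)^{-1}𝔹 + D where 𝔼 = diag(E₁₁, 0), 𝔸 = [[A₁₁, A₂₁ᵀ],[A₂₁, 0]], 𝔹 = [B₁; 0], ℭ = [C₁, 0]. Let V, W ∈ ℂ^{n₁×r} be matrices whose columns satisfy A₂₁ V = 0 and A₂₁ W = 0, and assume Ẽ = Wᵀ E₁₁ V is invertible. Let G̃(s) = C₁V (sẼ − Wᵀ A₁₁ V)^{-1} Wᵀ B₁ + D. Then s𝔼 − 𝔸 and sẼ − WᵀA₁₁V are invertible for all sufficiently large real s, and the error G(s) − G̃(s) tends to the zero matrix as s → +∞ along the real axis; that is, the error transfer function contains no polynomial part (the reduced model exactly matches the polynomial part of G). -/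

import Mathlib

open Matrix Filter

private lemma myMatInv_continuousAt {n : ℕ} {f : ℂ → Matrix (Fin n) (Fin n) ℂ} {t₀ : ℂ}
    (hf : ContinuousAt f t₀) (h : IsUnit (f t₀)) :
    ContinuousAt (fun t => (f t)⁻¹) t₀ := by
  have hdet : ((f t₀).det) ≠ 0 :=
    isUnit_iff_ne_zero.mp ((Matrix.isUnit_iff_isUnit_det _).mp h)
  have hinv : ContinuousAt Ring.inverse ((f t₀).det) := by
    rw [Ring.inverse_eq_inv']
    exact continuousAt_inv₀ hdet
  exact (continuousAt_matrix_inv (f t₀) hinv).comp hf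

private lemma myEventually_isUnit {n : ℕ} {f : ℂ → Matrix (Fin n) (Fin n) ℂ}
    (hf : ContinuousAt f 0) (h : IsUnit (f 0)) :
    ∀ᶠ t in nhds (0 : ℂ), IsUnit (f t) := by
  have hdet : ContinuousAt (fun t => (f t).det) 0 :=
    (continuous_id.matrix_det.continuousAt).comp hf
  have h0 : (f 0).det ≠ 0 := isUnit_iff_ne_zero.mp ((Matrix.isUnit_iff_isUnit_det _).mp h)
  filter_upwards [hdet.eventually_ne h0] with t ht using
    (Matrix.isUnit_iff_isUnit_det _).mpr (isUnit_iff_ne_zero.mpr ht)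

private lemma mySmul_isUnit_inv {n : ℕ} {c : ℂ} (hc : c ≠ 0) {M : Matrix (Fin n) (Fin n) ℂ}
    (hM : IsUnit M) : IsUnit (c • M) ∧ (c • M)⁻¹ = c⁻¹ • M⁻¹ := by
  have hmul : (c • M) * (c⁻¹ • M⁻¹) = 1 := by
    rw [Matrix.smul_mul, Matrix.mul_smul, smul_smul, mul_inv_cancel₀ hc,
      Matrix.mul_nonsing_inv _ ((Matrix.isUnit_iff_isUnit_det _).mp hM), one_smul]
  exact ⟨(Matrix.isUnit_iff_isUnit_det _).mpr (Matrix.isUnit_det_of_right_inverse hmul), Matrix.inv_eq_right_inv hmul⟩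

private lemma myCatMul {a b c : ℕ} {f : ℂ → Matrix (Fin a) (Fin b) ℂ}
    {g : ℂ → Matrix (Fin b) (Fin c) ℂ}
    {t : ℂ} (hf : ContinuousAt f t) (hg : ContinuousAt g t) :
    ContinuousAt (fun x => f x * g x) t := by
  have h : Continuous (fun pq : Matrix (Fin a) (Fin b) ℂ × Matrix (Fin b) (Fin c) ℂ =>
      pq.1 * pq.2) := continuous_fst.matrix_mul continuous_snd
  exact h.continuousAt.comp (hf.prodMk hg)

/-- The key algebraic computation at a fixed `s`: if the shifted matrices at `t = s⁻¹`
are invertible, then the pencil is invertible and the transfer function has an explicit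
`t • (⋯)` form. -/
private lemma myKey (n₁ n₂ m p : ℕ)
    (E₁₁ A₁₁ : Matrix (Fin n₁) (Fin n₁) ℂ)
    (A₂₁ : Matrix (Fin n₂) (Fin n₁) ℂ)
    (B₁ : Matrix (Fin n₁) (Fin m) ℂ)
    (C₁ : Matrix (Fin p) (Fin n₁) ℂ)
    (s : ℝ) (hs : (s:ℂ) ≠ 0)
    (hΦ : IsUnit (E₁₁ - ((s:ℂ))⁻¹ • A₁₁))
    (hK : IsUnit (A₂₁ * (E₁₁ - ((s:ℂ))⁻¹ • A₁₁)⁻¹ * A₂₁ᵀ)) :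
    IsUnit ((s : ℂ) • fromBlocks E₁₁ 0 0 0 - fromBlocks A₁₁ A₂₁ᵀ A₂₁ 0)
    ∧ fromCols C₁ (0 : Matrix (Fin p) (Fin n₂) ℂ)
        * ((s : ℂ) • fromBlocks E₁₁ 0 0 0 - fromBlocks A₁₁ A₂₁ᵀ A₂₁ 0)⁻¹
        * fromRows B₁ (0 : Matrix (Fin n₂) (Fin m) ℂ)
      = ((s:ℂ))⁻¹ • (C₁ * ((E₁₁ - ((s:ℂ))⁻¹ • A₁₁)⁻¹
          - (E₁₁ - ((s:ℂ))⁻¹ • A₁₁)⁻¹ * A₂₁ᵀ * (A₂₁ * (E₁₁ - ((s:ℂ))⁻¹ • A₁₁)⁻¹ * A₂₁ᵀ)⁻¹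
            * (A₂₁ * (E₁₁ - ((s:ℂ))⁻¹ • A₁₁)⁻¹)) * B₁) := by
  set t : ℂ := ((s:ℂ))⁻¹ with ht_def
  have ht : t ≠ 0 := inv_ne_zero hs
  have hst : (s:ℂ) * t = 1 := mul_inv_cancel₀ hs
  set Φi : Matrix (Fin n₁) (Fin n₁) ℂ := (E₁₁ - t • A₁₁)⁻¹ with hΦi
  set Ki : Matrix (Fin n₂) (Fin n₂) ℂ := (A₂₁ * Φi * A₂₁ᵀ)⁻¹ with hKi
  have hpencil : (s : ℂ) • fromBlocks E₁₁ 0 0 0 - fromBlocks A₁₁ A₂₁ᵀ A₂₁ 0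
      = fromBlocks ((s:ℂ) • E₁₁ - A₁₁) (-A₂₁ᵀ) (-A₂₁) 0 := by
    ext i j
    rcases i with i | i <;> rcases j with j | j <;>
      simp [Matrix.sub_apply, Matrix.smul_apply]
  set A : Matrix (Fin n₁) (Fin n₁) ℂ := (s:ℂ) • E₁₁ - A₁₁ with hA
  have hAeq : A = (s:ℂ) • (E₁₁ - t • A₁₁) := by
    rw [smul_sub, smul_smul, hst, one_smul]
  obtain ⟨hAU, hAinv⟩ := mySmul_isUnit_inv hs hΦ
  rw [← hAeq] at hAU hAinv
  haveI iA : Invertible A := hAU.invertible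
  have hiA : ⅟A = t • Φi := by rw [invOf_eq_nonsing_inv, hAinv]
  have hSc : (0 : Matrix (Fin n₂) (Fin n₂) ℂ) - -A₂₁ * ⅟A * -A₂₁ᵀ = (-t) • (A₂₁ * Φi * A₂₁ᵀ) := by
    rw [hiA]
    simp [Matrix.mul_smul, Matrix.smul_mul, Matrix.neg_mul, Matrix.mul_neg, neg_smul]
  obtain ⟨hSU, hSinv⟩ := mySmul_isUnit_inv (neg_ne_zero.mpr ht) hK
  rw [← hSc] at hSU hSinv
  haveI iS : Invertible ((0 : Matrix (Fin n₂) (Fin n₂) ℂ) - -A₂₁ * ⅟A * -A₂₁ᵀ) := hSU.invertible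
  have hiS : ⅟((0 : Matrix (Fin n₂) (Fin n₂) ℂ) - -A₂₁ * ⅟A * -A₂₁ᵀ) = (-t)⁻¹ • Ki := by
    rw [invOf_eq_nonsing_inv, hSinv]
  haveI iP : Invertible (fromBlocks A (-A₂₁ᵀ) (-A₂₁) (0 : Matrix (Fin n₂) (Fin n₂) ℂ)) :=
    fromBlocks₁₁Invertible A (-A₂₁ᵀ) (-A₂₁) 0
  constructor
  · rw [hpencil]; exact isUnit_of_invertible _
  · rw [hpencil, ← invOf_eq_nonsing_inv, invOf_fromBlocks₁₁_eq,
      fromCols_mul_fromBlocks, fromCols_mul_fromRows]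
    rw [hiS, hiA]
    simp only [Matrix.zero_mul, Matrix.mul_zero, add_zero, Matrix.mul_add, Matrix.add_mul,
      Matrix.mul_sub, Matrix.sub_mul, Matrix.smul_mul, Matrix.mul_smul, Matrix.neg_mul,
      Matrix.mul_neg, smul_neg, neg_neg, smul_smul, smul_sub, smul_add, Matrix.mul_assoc,
      inv_neg, mul_neg, neg_mul, neg_smul, mul_inv_cancel₀ ht, inv_mul_cancel₀ ht,
      one_mul, mul_one, one_smul, smul_zero, neg_zero, zero_add, sub_eq_add_neg]

/-- For an index-2 Stokes-type DAE with reduced bases satisfying `A₂₁ V = 0`,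
`A₂₁ W = 0`, and `Wᵀ E₁₁ V` invertible: the full and reduced pencils are
invertible for all sufficiently large real `s`, and the error transfer
function `G(s) − G̃(s)` tends to zero as `s → +∞` along the real axis, i.e.
the error contains no polynomial part (the reduced model matches the
polynomial part of `G`). -/
theorem index2_error_no_polynomial_part
    (n₁ n₂ m p : ℕ) (r : ℕ)
    (E₁₁ A₁₁ : Matrix (Fin n₁) (Fin n₁) ℂ)
    (A₂₁ : Matrix (Fin n₂) (Fin n₁) ℂ)
    (B₁ : Matrix (Fin n₁) (Fin m) ℂ)
    (C₁ : Matrix (Fin p) (Fin n₁) ℂ)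
    (D : Matrix (Fin p) (Fin m) ℂ)
    (hE : IsUnit E₁₁)
    (hSchur : IsUnit (A₂₁ * E₁₁⁻¹ * A₂₁ᵀ))
    (V W : Matrix (Fin n₁) (Fin r) ℂ)
    (hAV : A₂₁ * V = 0)
    (hAW : A₂₁ * W = 0)
    (hEt : IsUnit (Wᵀ * E₁₁ * V)) :
    (∀ᶠ s : ℝ in Filter.atTop,
        IsUnit ((s : ℂ) • fromBlocks E₁₁ 0 0 0 - fromBlocks A₁₁ A₂₁ᵀ A₂₁ 0)
        ∧ IsUnit ((s : ℂ) • (Wᵀ * E₁₁ * V) - Wᵀ * A₁₁ * V))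
    ∧ Filter.Tendsto
        (fun s : ℝ =>
          (fromCols C₁ (0 : Matrix (Fin p) (Fin n₂) ℂ)
              * ((s : ℂ) • fromBlocks E₁₁ 0 0 0 - fromBlocks A₁₁ A₂₁ᵀ A₂₁ 0)⁻¹
              * fromRows B₁ (0 : Matrix (Fin n₂) (Fin m) ℂ) + D)
            - (C₁ * V * ((s : ℂ) • (Wᵀ * E₁₁ * V) - Wᵀ * A₁₁ * V)⁻¹ * (Wᵀ * B₁) + D))
        Filter.atTop (nhds 0) := by
  classical
  -- continuity data at t = 0
  have hΦcont : Continuous (fun t : ℂ => E₁₁ - t • A₁₁) :=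
    continuous_const.sub (continuous_id.smul continuous_const)
  have hΦ0 : (fun t : ℂ => E₁₁ - t • A₁₁) 0 = E₁₁ := by simp
  have hΦunit0 : IsUnit ((fun t : ℂ => E₁₁ - t • A₁₁) 0) := by rw [hΦ0]; exact hE
  have hΦinv : ContinuousAt (fun t : ℂ => (E₁₁ - t • A₁₁)⁻¹) 0 :=
    myMatInv_continuousAt hΦcont.continuousAt hΦunit0
  have hKcont : ContinuousAt (fun t : ℂ => A₂₁ * (E₁₁ - t • A₁₁)⁻¹ * A₂₁ᵀ) 0 :=
    myCatMul (myCatMul continuousAt_const hΦinv) continuousAt_const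
  have hKunit0 : IsUnit ((fun t : ℂ => A₂₁ * (E₁₁ - t • A₁₁)⁻¹ * A₂₁ᵀ) 0) := by
    simpa using hSchur
  have hKinv : ContinuousAt (fun t : ℂ => (A₂₁ * (E₁₁ - t • A₁₁)⁻¹ * A₂₁ᵀ)⁻¹) 0 :=
    myMatInv_continuousAt hKcont hKunit0
  have hΨcont : Continuous (fun t : ℂ => Wᵀ * E₁₁ * V - t • (Wᵀ * A₁₁ * V)) :=
    continuous_const.sub (continuous_id.smul continuous_const)
  have hΨunit0 : IsUnit ((fun t : ℂ => Wᵀ * E₁₁ * V - t • (Wᵀ * A₁₁ * V)) 0) := by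
    simpa using hEt
  have hΨinv : ContinuousAt (fun t : ℂ => (Wᵀ * E₁₁ * V - t • (Wᵀ * A₁₁ * V))⁻¹) 0 :=
    myMatInv_continuousAt hΨcont.continuousAt hΨunit0
  -- the limiting function H
  set H : ℂ → Matrix (Fin p) (Fin m) ℂ := fun t =>
    C₁ * ((E₁₁ - t • A₁₁)⁻¹
        - (E₁₁ - t • A₁₁)⁻¹ * A₂₁ᵀ * (A₂₁ * (E₁₁ - t • A₁₁)⁻¹ * A₂₁ᵀ)⁻¹
          * (A₂₁ * (E₁₁ - t • A₁₁)⁻¹)) * B₁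
      - C₁ * V * (Wᵀ * E₁₁ * V - t • (Wᵀ * A₁₁ * V))⁻¹ * (Wᵀ * B₁) with hH
  have hHcont : ContinuousAt H 0 := by
    apply ContinuousAt.sub
    · exact myCatMul (myCatMul continuousAt_const
        (hΦinv.sub (myCatMul (myCatMul (myCatMul hΦinv continuousAt_const) hKinv)
          (myCatMul continuousAt_const hΦinv)))) continuousAt_const
    · exact myCatMul (myCatMul continuousAt_const hΨinv) continuousAt_const
  -- t(s) = (s : ℂ)⁻¹ tends to 0
  have htend : Tendsto (fun s : ℝ => ((s:ℂ))⁻¹) atTop (nhds 0) := by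
    have h1 : Tendsto (fun s : ℝ => s⁻¹) atTop (nhds 0) := tendsto_inv_atTop_zero
    have h2 : Tendsto (fun s : ℝ => ((s⁻¹ : ℝ) : ℂ)) atTop (nhds ((0:ℝ):ℂ)) :=
      (Complex.continuous_ofReal.tendsto _).comp h1
    simpa using h2
  -- eventually in atTop, all three shifted matrices are invertible and s ≠ 0
  have hev1 : ∀ᶠ t : ℂ in nhds 0, IsUnit (E₁₁ - t • A₁₁) :=
    myEventually_isUnit hΦcont.continuousAt hΦunit0
  have hev2 : ∀ᶠ t : ℂ in nhds 0, IsUnit (A₂₁ * (E₁₁ - t • A₁₁)⁻¹ * A₂₁ᵀ) :=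
    myEventually_isUnit hKcont hKunit0
  have hev3 : ∀ᶠ t : ℂ in nhds 0, IsUnit (Wᵀ * E₁₁ * V - t • (Wᵀ * A₁₁ * V)) :=
    myEventually_isUnit hΨcont.continuousAt hΨunit0
  have hevAll : ∀ᶠ s : ℝ in atTop,
      (IsUnit (E₁₁ - ((s:ℂ))⁻¹ • A₁₁)
        ∧ IsUnit (A₂₁ * (E₁₁ - ((s:ℂ))⁻¹ • A₁₁)⁻¹ * A₂₁ᵀ)
        ∧ IsUnit (Wᵀ * E₁₁ * V - ((s:ℂ))⁻¹ • (Wᵀ * A₁₁ * V)))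
      ∧ (s:ℂ) ≠ 0 := by
    have := htend.eventually (hev1.and (hev2.and hev3))
    filter_upwards [this, eventually_ge_atTop (1:ℝ)] with s h hs1
    exact ⟨h, by
      have : s ≠ 0 := by linarith
      exact_mod_cast this⟩
  -- reduced pencil facts
  have hred : ∀ s : ℝ, (s:ℂ) ≠ 0 → IsUnit (Wᵀ * E₁₁ * V - ((s:ℂ))⁻¹ • (Wᵀ * A₁₁ * V)) →
      IsUnit ((s : ℂ) • (Wᵀ * E₁₁ * V) - Wᵀ * A₁₁ * V)
      ∧ ((s : ℂ) • (Wᵀ * E₁₁ * V) - Wᵀ * A₁₁ * V)⁻¹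
        = ((s:ℂ))⁻¹ • (Wᵀ * E₁₁ * V - ((s:ℂ))⁻¹ • (Wᵀ * A₁₁ * V))⁻¹ := by
    intro s hs hΨ
    have heq : (s : ℂ) • (Wᵀ * E₁₁ * V) - Wᵀ * A₁₁ * V
        = (s:ℂ) • (Wᵀ * E₁₁ * V - ((s:ℂ))⁻¹ • (Wᵀ * A₁₁ * V)) := by
      rw [smul_sub, smul_smul, mul_inv_cancel₀ hs, one_smul]
    obtain ⟨h1, h2⟩ := mySmul_isUnit_inv hs hΨ
    rw [← heq] at h1 h2
    exact ⟨h1, h2⟩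
  constructor
  · filter_upwards [hevAll] with s hs
    obtain ⟨⟨hΦ, hK, hΨ⟩, hs0⟩ := hs
    exact ⟨(myKey n₁ n₂ m p E₁₁ A₁₁ A₂₁ B₁ C₁ s hs0 hΦ hK).1, (hred s hs0 hΨ).1⟩
  · have hlim : Tendsto (fun s : ℝ => ((s:ℂ))⁻¹ • H (((s:ℂ))⁻¹)) atTop (nhds 0) := by
      have := Tendsto.smul htend (hHcont.tendsto.comp htend)
      simpa using this
    apply hlim.congr'
    filter_upwards [hevAll] with s hs
    obtain ⟨⟨hΦ, hK, hΨ⟩, hs0⟩ := hs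
    obtain ⟨-, hbig⟩ := myKey n₁ n₂ m p E₁₁ A₁₁ A₂₁ B₁ C₁ s hs0 hΦ hK
    obtain ⟨-, hredinv⟩ := hred s hs0 hΨ
    rw [hH]
    simp only []
    rw [smul_sub, ← hbig]
    have : C₁ * V * ((s : ℂ) • (Wᵀ * E₁₁ * V) - Wᵀ * A₁₁ * V)⁻¹ * (Wᵀ * B₁)
        = ((s:ℂ))⁻¹ • (C₁ * V * (Wᵀ * E₁₁ * V - ((s:ℂ))⁻¹ • (Wᵀ * A₁₁ * V))⁻¹ * (Wᵀ * B₁)) := by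
      rw [hredinv, Matrix.mul_smul, Matrix.smul_mul]
    rw [this]
    abel
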